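/- In the conservation transition system for Handoff Counters, over an infinite execution satisfying the fairness conditions that (f1) every node i with tier_i > 0 whose value vals_i is nonzero eventually performs a create-token step, and (f2) every enabled token is eventually acquired, eventual accounting holds: for every time t, there exists a later time t′ ≥ t such that CTV at tier 0 at time t′ is at least the number of increment steps performed before time t, i.e., CTV_{C^{t′}}(0) ≥ I^t. -/

import Mathlib

/-- A configuration of the conservation transition system for Handoff
Counters over a (finite) type `ι` of nodes: a value `vals i : ℕ` for each node
`i`, together with a finite collection of enabled tokens, each a pair `(i, n)`
recording its creating node `i` and a value `n`. -/
structure Config (ι : Type) where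
  vals : ι → ℕ
  tokens : Multiset (ι × ℕ)

/-- Labels identifying the kind of a step. -/
inductive Lab (ι : Type) where
  | incr (i : ι)                     -- increment at node `i`
  | create (i : ι)                   -- create a token at node `i`
  | acquire (i : ι) (n : ℕ) (j : ι)  -- node `j` acquires the token `(i, n)`
  | skip                             -- a step changing nothing

/-- `(Lab.isIncr l) = true` iff `l` labels an increment step. -/
def Lab.isIncr {ι : Type} : Lab ι → Bool
  | .incr _ => true
  | _ => false

/-- The labelled step relation of the conservation transition system:
(increment at `i`) `vals i := vals i + 1`;
(create token at `i`, only if `tier i > 0`) add the enabled token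
`(i, vals i)` and set `vals i := 0`;
(acquire) remove an enabled token `(i, n)` and add `n` to `vals j` for some
node `j` with `tier j < tier i`; or a step leaving everything unchanged. -/
inductive Step {ι : Type} [DecidableEq ι] (tier : ι → ℕ) :
    Config ι → Lab ι → Config ι → Prop
  | incr (C : Config ι) (i : ι) :
      Step tier C (.incr i)
        ⟨Function.update C.vals i (C.vals i + 1), C.tokens⟩
  | create (C : Config ι) (i : ι) (h : 0 < tier i) :
      Step tier C (.create i)
        ⟨Function.update C.vals i 0, (i, C.vals i) ::ₘ C.tokens⟩
  | acquire (C : Config ι) (i : ι) (n : ℕ) (j : ι)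
      (hmem : (i, n) ∈ C.tokens) (hj : tier j < tier i) :
      Step tier C (.acquire i n j)
        ⟨Function.update C.vals j (C.vals j + n), C.tokens.erase (i, n)⟩
  | skip (C : Config ι) : Step tier C .skip C

/-- The initial configuration: all `vals` are `0` and there are no enabled
tokens. -/
def initConfig (ι : Type) : Config ι := ⟨fun _ => 0, 0⟩

/-- The cumulative tier value for tier `k` in configuration `C`:
`CTV_C(k) = Σ { vals i : tier i ≤ k } + Σ { n : (i, n) enabled, tier i ≤ k }`. -/
def CTV {ι : Type} [Fintype ι] (tier : ι → ℕ) (C : Config ι) (k : ℕ) : ℕ :=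
  (∑ i, if tier i ≤ k then C.vals i else 0) +
    ((C.tokens.filter (fun t => tier t.1 ≤ k)).map Prod.snd).sum

set_option linter.unusedSectionVars false

section Helpers
variable {ι : Type} [Fintype ι] [DecidableEq ι] (tier : ι → ℕ)

lemma step_cases {C C' : Config ι} {l : Lab ι} (h : Step tier C l C') :
    (∃ i, l = .incr i ∧ C' = ⟨Function.update C.vals i (C.vals i + 1), C.tokens⟩) ∨
    (∃ i, l = .create i ∧ 0 < tier i ∧
      C' = ⟨Function.update C.vals i 0, (i, C.vals i) ::ₘ C.tokens⟩) ∨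
    (∃ i n j, l = .acquire i n j ∧ (i, n) ∈ C.tokens ∧ tier j < tier i ∧
      C' = ⟨Function.update C.vals j (C.vals j + n), C.tokens.erase (i, n)⟩) ∨
    (l = .skip ∧ C' = C) := by
  cases h with
  | incr i => exact Or.inl ⟨i, rfl, rfl⟩
  | create i h => exact Or.inr (Or.inl ⟨i, rfl, h, rfl⟩)
  | acquire i n j hmem hj => exact Or.inr (Or.inr (Or.inl ⟨i, n, j, rfl, hmem, hj, rfl⟩))
  | skip => exact Or.inr (Or.inr (Or.inr ⟨rfl, rfl⟩))

lemma sum_update_aux (k : ℕ) (v : ι → ℕ) (a : ι) (x : ℕ) :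
    (∑ i, if tier i ≤ k then Function.update v a x i else 0) + (if tier a ≤ k then v a else 0)
      = (∑ i, if tier i ≤ k then v i else 0) + (if tier a ≤ k then x else 0) := by
  rw [← Finset.add_sum_erase _ _ (Finset.mem_univ a), ← Finset.add_sum_erase _ (fun i => if tier i ≤ k then v i else 0) (Finset.mem_univ a)]
  have h1 : ∑ i ∈ Finset.univ.erase a, (if tier i ≤ k then Function.update v a x i else 0)
      = ∑ i ∈ Finset.univ.erase a, (if tier i ≤ k then v i else 0) := by
    apply Finset.sum_congr rfl
    intro i hi
    rw [Function.update_of_ne (Finset.ne_of_mem_erase hi)]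
  rw [h1, Function.update_self]
  omega


lemma tok_filter_cons (p : ι × ℕ → Prop) [DecidablePred p] (a : ι × ℕ) (s : Multiset (ι × ℕ)) :
    (((a ::ₘ s).filter p).map Prod.snd).sum
      = (if p a then a.2 else 0) + ((s.filter p).map Prod.snd).sum := by
  rw [Multiset.filter_cons]
  split_ifs with h <;> simp

lemma tok_filter_erase (p : ι × ℕ → Prop) [DecidablePred p] (a : ι × ℕ) (s : Multiset (ι × ℕ))
    (ha : a ∈ s) :
    ((s.filter p).map Prod.snd).sum
      = (if p a then a.2 else 0) + (((s.erase a).filter p).map Prod.snd).sum := by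
  conv_lhs => rw [← Multiset.cons_erase ha]
  exact tok_filter_cons p a _

lemma CTV_le_of_step {C C' : Config ι} {l : Lab ι} (h : Step tier C l C') (k : ℕ) :
    CTV tier C k ≤ CTV tier C' k := by
  rcases step_cases tier h with ⟨i, -, rfl⟩ | ⟨i, -, hpos, rfl⟩ | ⟨i, n, j, -, hmem, hj, rfl⟩ | ⟨-, rfl⟩
  · -- incr
    unfold CTV
    simp only
    have := sum_update_aux tier k C.vals i (C.vals i + 1)
    split_ifs at this <;> omega
  · -- create
    unfold CTV
    simp only
    rw [tok_filter_cons]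
    have := sum_update_aux tier k C.vals i 0
    simp only at this ⊢
    split_ifs at this ⊢ <;> omega
  · -- acquire
    unfold CTV
    simp only
    rw [tok_filter_erase (fun t => tier t.1 ≤ k) (i, n) C.tokens hmem]
    have := sum_update_aux tier k C.vals j (C.vals j + n)
    simp only at this ⊢
    split_ifs at this ⊢ <;> omega
  · exact le_refl _

lemma CTV_acquire_gain {C C' : Config ι} {i j : ι} {n : ℕ}
    (h : Step tier C (.acquire i n j) C') (k : ℕ) (hik : k < tier i) (hjk : tier j ≤ k) :
    CTV tier C' k = CTV tier C k + n := by
  rcases step_cases tier h with ⟨i', he, -⟩ | ⟨i', he, -⟩ | ⟨i', n', j', he, hmem, hj, rfl⟩ | ⟨he, -⟩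
  · cases he
  · cases he
  swap
  · cases he
  injection he with h1 h2 h3
  subst h1; subst h2; subst h3
  unfold CTV
  simp only
  rw [tok_filter_erase (fun t => tier t.1 ≤ k) (i, n) C.tokens hmem]
  have := sum_update_aux tier k C.vals j (C.vals j + n)
  simp only at this ⊢
  split_ifs at this ⊢ <;> omega

lemma CTV_step_count {C C' : Config ι} {l : Lab ι} (h : Step tier C l C') (T : ℕ)
    (hT : ∀ i, tier i ≤ T) :
    CTV tier C' T = CTV tier C T + (if l.isIncr then 1 else 0) := by
  rcases step_cases tier h with ⟨i, rfl, rfl⟩ | ⟨i, rfl, hpos, rfl⟩ | ⟨i, n, j, rfl, hmem, hj, rfl⟩ | ⟨rfl, rfl⟩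
  · unfold CTV
    simp only [Lab.isIncr, if_true]
    have := sum_update_aux tier T C.vals i (C.vals i + 1)
    have hTi := hT i
    split_ifs at this <;> omega
  · unfold CTV
    simp only [Lab.isIncr, Bool.false_eq_true, if_false]
    rw [tok_filter_cons]
    have := sum_update_aux tier T C.vals i 0
    have hTi := hT i
    split_ifs at this ⊢ <;> omega
  · unfold CTV
    simp only [Lab.isIncr, Bool.false_eq_true, if_false]
    rw [tok_filter_erase (fun t => tier t.1 ≤ T) (i, n) C.tokens hmem]
    have := sum_update_aux tier T C.vals j (C.vals j + n)
    have hTi := hT i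
    have hTj := hT j
    split_ifs at this ⊢ <;> omega
  · simp [Lab.isIncr]

lemma tok_split (k : ℕ) (s : Multiset (ι × ℕ)) :
    ((s.filter (fun t => tier t.1 ≤ k + 1)).map Prod.snd).sum
      = ((s.filter (fun t => tier t.1 ≤ k)).map Prod.snd).sum
        + ((s.filter (fun t => tier t.1 = k + 1)).map Prod.snd).sum := by
  induction s using Multiset.induction_on with
  | empty => simp
  | cons a s ih =>
    rw [tok_filter_cons, tok_filter_cons, tok_filter_cons]
    split_ifs <;> omega

lemma CTV_split (C : Config ι) (k : ℕ) :
    CTV tier C (k + 1)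
      = CTV tier C k + (∑ i, if tier i = k + 1 then C.vals i else 0)
        + ((C.tokens.filter (fun t => tier t.1 = k + 1)).map Prod.snd).sum := by
  unfold CTV
  rw [tok_split]
  have : (∑ i, if tier i ≤ k + 1 then C.vals i else 0)
      = (∑ i, if tier i ≤ k then C.vals i else 0) + ∑ i, if tier i = k + 1 then C.vals i else 0 := by
    rw [← Finset.sum_add_distrib]
    apply Finset.sum_congr rfl
    intro i _
    split_ifs <;> omega
  omega


lemma le_erase_of_not_mem {α : Type*} [DecidableEq α] {M s : Multiset α} {a : α}
    (h : M ≤ s) (ha : a ∉ M) : M ≤ s.erase a := by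
  rw [Multiset.le_iff_count] at h ⊢
  intro x
  by_cases hx : x = a
  · subst hx; simp [Multiset.count_eq_zero_of_notMem ha]
  · rw [Multiset.count_erase_of_ne hx]; exact h x

lemma CTV_mono (st : ℕ → Config ι) (lab : ℕ → Lab ι)
    (hstep : ∀ n, Step tier (st n) (lab n) (st (n + 1))) (k : ℕ)
    {a b : ℕ} (hab : a ≤ b) : CTV tier (st a) k ≤ CTV tier (st b) k := by
  induction b, hab using Nat.le_induction with
  | base => exact le_refl _
  | succ b hb ih => exact le_trans ih (CTV_le_of_step tier (hstep b) k)

lemma conservation (st : ℕ → Config ι) (lab : ℕ → Lab ι)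
    (hinit : st 0 = initConfig ι)
    (hstep : ∀ n, Step tier (st n) (lab n) (st (n + 1)))
    (T : ℕ) (hT : ∀ i, tier i ≤ T) (t : ℕ) :
    ((Finset.range t).filter (fun n => (lab n).isIncr)).card = CTV tier (st t) T := by
  induction t with
  | zero => simp [hinit, initConfig, CTV]
  | succ t ih =>
    rw [Finset.range_add_one, Finset.filter_insert, CTV_step_count tier (hstep t) T hT]
    by_cases h : (lab t).isIncr
    · rw [if_pos h, if_pos h, Finset.card_insert_of_notMem (by simp), ih]
    · rw [if_neg h, if_neg (by simpa using h), ih, Nat.add_zero]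

lemma drain (st : ℕ → Config ι) (lab : ℕ → Lab ι)
    (hstep : ∀ n, Step tier (st n) (lab n) (st (n + 1)))
    (hfair₁ : ∀ i n, 0 < tier i → (st n).vals i ≠ 0 → ∃ m ≥ n, lab m = Lab.create i)
    (hfair₂ : ∀ n, ∀ tok ∈ (st n).tokens,
      ∃ m ≥ n, ∃ j, lab m = Lab.acquire tok.1 tok.2 j)
    (k : ℕ) :
    ∀ N : ℕ, ∀ s : Finset ι, ∀ M : Multiset (ι × ℕ), ∀ t : ℕ,
      2 * s.card + Multiset.card M ≤ N →
      (∀ i ∈ s, tier i = k + 1) → (∀ p ∈ M, tier p.1 = k + 1) →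
      M ≤ (st t).tokens →
      ∃ t' ≥ t, CTV tier (st t) k + (∑ i ∈ s, (st t).vals i) + (M.map Prod.snd).sum
        ≤ CTV tier (st t') k := by
  intro N
  induction N with
  | zero =>
    intro s M t hcard hs hM hMle
    have hs0 : s = ∅ := Finset.card_eq_zero.mp (by omega)
    have hM0 : M = 0 := Multiset.card_eq_zero.mp (by omega)
    subst hs0; subst hM0
    exact ⟨t, le_refl t, by simp⟩
  | succ N ih =>
    intro s M t hcard hs hM hMle
    classical
    by_cases hz : (∀ i ∈ s, (st t).vals i = 0) ∧ M = 0
    · refine ⟨t, le_refl t, ?_⟩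
      rw [Finset.sum_eq_zero hz.1, hz.2]
      simp
    have hex : ∃ r, t ≤ r ∧ ((∃ i ∈ s, lab r = Lab.create i) ∨
        (∃ p ∈ M, ∃ j, lab r = Lab.acquire p.1 p.2 j)) := by
      by_cases h1 : ∃ i ∈ s, (st t).vals i ≠ 0
      · obtain ⟨i, his, hv⟩ := h1
        obtain ⟨m, hm, hlab⟩ := hfair₁ i t (by rw [hs i his]; omega) hv
        exact ⟨m, hm, Or.inl ⟨i, his, hlab⟩⟩
      · have hM0 : M ≠ 0 := by
          intro h0
          exact hz ⟨fun i hi => by_contra fun hv => h1 ⟨i, hi, hv⟩, h0⟩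
        obtain ⟨p, hp⟩ := Multiset.exists_mem_of_ne_zero hM0
        obtain ⟨m, hm, j, hlab⟩ := hfair₂ t p (Multiset.mem_of_le hMle hp)
        exact ⟨m, hm, Or.inr ⟨p, hp, j, hlab⟩⟩
    set m := Nat.find hex with hmdef
    have hPm := Nat.find_spec hex
    have hmin : ∀ r < m, ¬ (t ≤ r ∧ ((∃ i ∈ s, lab r = Lab.create i) ∨
        (∃ p ∈ M, ∃ j, lab r = Lab.acquire p.1 p.2 j))) := fun r hr => Nat.find_min hex hr
    have htm : t ≤ m := hPm.1
    have pres : ∀ d, t + d ≤ m →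
        M ≤ (st (t + d)).tokens ∧ ∀ i ∈ s, (st t).vals i ≤ (st (t + d)).vals i := by
      intro d
      induction d with
      | zero => intro _; exact ⟨hMle, fun i _ => le_refl _⟩
      | succ d ihd =>
        intro hle
        have hlt : t + d < m := by omega
        obtain ⟨ih1, ih2⟩ := ihd (by omega)
        have hnE : ¬ ((∃ i ∈ s, lab (t + d) = Lab.create i) ∨
            (∃ p ∈ M, ∃ j, lab (t + d) = Lab.acquire p.1 p.2 j)) :=
          fun h => hmin (t + d) hlt ⟨by omega, h⟩
        have hshow : t + (d + 1) = (t + d) + 1 := rfl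
        rcases step_cases tier (hstep (t + d)) with ⟨i, hl, hC⟩ | ⟨i, hl, hpos, hC⟩ |
          ⟨i, n, j, hl, hmem, hj, hC⟩ | ⟨hl, hC⟩
        · rw [hshow, hC]
          refine ⟨ih1, fun i' hi' => le_trans (ih2 i' hi') ?_⟩
          by_cases h : i' = i
          · subst h; simp
          · simp [Function.update_of_ne h]
        · have hins : i ∉ s := fun hin => hnE (Or.inl ⟨i, hin, hl⟩)
          rw [hshow, hC]
          refine ⟨le_trans ih1 (Multiset.le_cons_self _ _), fun i' hi' => ?_⟩
          simp only
          rw [Function.update_of_ne (by rintro rfl; exact hins hi')]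
          exact ih2 i' hi'
        · have hpm : (i, n) ∉ M := fun hin => hnE (Or.inr ⟨(i, n), hin, j, hl⟩)
          rw [hshow, hC]
          refine ⟨le_erase_of_not_mem ih1 hpm, fun i' hi' => le_trans (ih2 i' hi') ?_⟩
          by_cases h : i' = j
          · subst h; simp
          · simp [Function.update_of_ne h]
        · rw [hshow, hC]; exact ⟨ih1, ih2⟩
    have hpresm : M ≤ (st m).tokens ∧ ∀ i ∈ s, (st t).vals i ≤ (st m).vals i := by
      have hp := pres (m - t) (by omega)
      rwa [show t + (m - t) = m by omega] at hp
    have hmono : CTV tier (st t) k ≤ CTV tier (st m) k := CTV_mono tier st lab hstep k htm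
    rcases hPm.2 with ⟨i, his, hlab⟩ | ⟨p, hpM, j, hlab⟩
    · -- create at i ∈ s
      have hstep_m := hstep m
      rw [hlab] at hstep_m
      rcases step_cases tier hstep_m with ⟨i', he, -⟩ | ⟨i', he, hpos, hC⟩ |
        ⟨i', n', j', he, -⟩ | ⟨he, -⟩
      · cases he
      swap
      · cases he
      swap
      · cases he
      injection he with h1
      subst h1
      obtain ⟨t', ht', hineq⟩ := ih (s.erase i) ((i, (st m).vals i) ::ₘ M) (m + 1)
        (by
          have h1 : 1 ≤ s.card := Finset.card_pos.mpr ⟨i, his⟩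
          rw [Finset.card_erase_of_mem his, Multiset.card_cons]
          omega)
        (fun i' h => hs i' (Finset.mem_of_mem_erase h))
        (fun p hp => by
          rcases Multiset.mem_cons.mp hp with h | h
          · rw [h]; exact hs i his
          · exact hM p h)
        (by rw [hC]; exact Multiset.cons_le_cons _ hpresm.1)
      refine ⟨t', by omega, ?_⟩
      have hsum_t : ∑ i' ∈ s, (st t).vals i'
          = (st t).vals i + ∑ i' ∈ s.erase i, (st t).vals i' :=
        (Finset.add_sum_erase s _ his).symm
      have hsum_m : ∑ i' ∈ s.erase i, (st (m + 1)).vals i'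
          = ∑ i' ∈ s.erase i, (st m).vals i' := by
        refine Finset.sum_congr rfl fun i' hi' => ?_
        rw [hC]
        simp only
        rw [Function.update_of_ne (Finset.ne_of_mem_erase hi')]
      have hle1 : ∑ i' ∈ s.erase i, (st t).vals i' ≤ ∑ i' ∈ s.erase i, (st m).vals i' :=
        Finset.sum_le_sum fun i' hi' => hpresm.2 i' (Finset.mem_of_mem_erase hi')
      have hle2 : (st t).vals i ≤ (st m).vals i := hpresm.2 i his
      have hmono2 : CTV tier (st m) k ≤ CTV tier (st (m + 1)) k :=
        CTV_le_of_step tier (hstep m) k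
      rw [Multiset.map_cons, Multiset.sum_cons, hsum_m] at hineq
      omega
    · -- acquire of p ∈ M
      have hstep_m := hstep m
      rw [hlab] at hstep_m
      rcases step_cases tier hstep_m with ⟨i', he, -⟩ | ⟨i', he, -⟩ |
        ⟨i', n', j', he, hmem, hj, hC⟩ | ⟨he, -⟩
      · cases he
      · cases he
      swap
      · cases he
      injection he with h1 h2 h3
      subst h1; subst h2; subst h3
      have htierp : tier p.1 = k + 1 := hM p hpM
      have hkj : tier j ≤ k := by omega
      have hgain : CTV tier (st (m + 1)) k = CTV tier (st m) k + p.2 :=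
        CTV_acquire_gain tier hstep_m k (by omega) hkj
      obtain ⟨t', ht', hineq⟩ := ih s (M.erase p) (m + 1)
        (by
          have h1 : 0 < Multiset.card M := Multiset.card_pos_iff_exists_mem.mpr ⟨p, hpM⟩
          rw [Multiset.card_erase_of_mem hpM, Nat.pred_eq_sub_one]
          omega)
        hs
        (fun q hq => hM q (Multiset.mem_of_mem_erase hq))
        (by
          rw [hC]
          exact Multiset.erase_le_erase _ hpresm.1)
      refine ⟨t', by omega, ?_⟩
      have hMsum : (M.map Prod.snd).sum = p.2 + ((M.erase p).map Prod.snd).sum := by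
        conv_lhs => rw [← Multiset.cons_erase hpM]
        rw [Multiset.map_cons, Multiset.sum_cons]
      have hsum_m : ∑ i' ∈ s, (st m).vals i' ≤ ∑ i' ∈ s, (st (m + 1)).vals i' := by
        refine Finset.sum_le_sum fun i' hi' => ?_
        rw [hC]
        by_cases h : i' = j
        · subst h; simp
        · simp [Function.update_of_ne h]
      have hle1 : ∑ i' ∈ s, (st t).vals i' ≤ ∑ i' ∈ s, (st m).vals i' :=
        Finset.sum_le_sum fun i' hi' => hpresm.2 i' hi'
      omega

end Helpers

/-- Eventual accounting: over an infinite execution of the conservation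
transition system (tiers bounded above by `T`), satisfying the fairness
conditions that (f1) every node `i` with `tier i > 0` whose value `vals i` is
nonzero eventually performs a create-token step, and (f2) every enabled token
is eventually acquired, for every time `t` there is a later time `t' ≥ t` such
that the cumulative tier value at tier 0 at time `t'` is at least the number
`I^t` of increment steps performed before time `t`. -/
theorem eventual_accounting {ι : Type} [Fintype ι] [DecidableEq ι]
    (tier : ι → ℕ) (T : ℕ) (hT : ∀ i, tier i ≤ T)
    (st : ℕ → Config ι) (lab : ℕ → Lab ι)
    (hinit : st 0 = initConfig ι)
    (hstep : ∀ n, Step tier (st n) (lab n) (st (n + 1)))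
    -- (f1) a node of positive tier with a nonzero value eventually creates a token
    (hfair₁ : ∀ i n, 0 < tier i → (st n).vals i ≠ 0 →
      ∃ m ≥ n, lab m = Lab.create i)
    -- (f2) every enabled token is eventually acquired
    (hfair₂ : ∀ n, ∀ tok ∈ (st n).tokens,
      ∃ m ≥ n, ∃ j, lab m = Lab.acquire tok.1 tok.2 j) :
    ∀ t, ∃ t' ≥ t,
      ((Finset.range t).filter (fun n => (lab n).isIncr)).card ≤
        CTV tier (st t') 0 := by
  intro t
  have key : ∀ d : ℕ, ∃ t' ≥ t,
      ((Finset.range t).filter (fun n => (lab n).isIncr)).card ≤ CTV tier (st t') (T - d) := by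
    intro d
    induction d with
    | zero =>
      refine ⟨t, le_refl t, ?_⟩
      rw [Nat.sub_zero]
      exact le_of_eq (conservation tier st lab hinit hstep T hT t)
    | succ d ihd =>
      obtain ⟨t₁, ht₁, h1⟩ := ihd
      by_cases hdT : T ≤ d
      · rw [show T - (d + 1) = T - d by omega]
        exact ⟨t₁, ht₁, h1⟩
      · set k := T - (d + 1) with hkdef
        have hk : k + 1 = T - d := by omega
        obtain ⟨t', ht', h2⟩ := drain tier st lab hstep hfair₁ hfair₂ k
          (2 * (Finset.univ.filter fun i => tier i = k + 1).card
            + Multiset.card ((st t₁).tokens.filter fun p => tier p.1 = k + 1))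
          (Finset.univ.filter fun i => tier i = k + 1)
          ((st t₁).tokens.filter fun p => tier p.1 = k + 1)
          t₁ (le_refl _)
          (fun i hi => (Finset.mem_filter.mp hi).2)
          (fun p hp => (Multiset.mem_filter.mp hp).2)
          (Multiset.filter_le _ _)
        refine ⟨t', le_trans ht₁ ht', ?_⟩
        have hsplit := CTV_split tier (st t₁) k
        have hfs : ∑ i ∈ Finset.univ.filter (fun i => tier i = k + 1), (st t₁).vals i
            = ∑ i, if tier i = k + 1 then (st t₁).vals i else 0 :=
          Finset.sum_filter _ _
        rw [hfs] at h2
        calc ((Finset.range t).filter (fun n => (lab n).isIncr)).card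
            ≤ CTV tier (st t₁) (T - d) := h1
          _ = CTV tier (st t₁) (k + 1) := by rw [hk]
          _ ≤ CTV tier (st t') k := by rw [hsplit] at *; exact h2
  obtain ⟨t', ht', h⟩ := key T
  rw [Nat.sub_self] at h
  exact ⟨t', ht', h⟩
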